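/- arXiv:2604.13544 — 3 statements merged into one kernel-verified Lean document; each statement's English description precedes it below -/
import Mathlib

section
/- If E₀ is a perfect subset of the Cantor set that is open in its closure, and E₀ is nonempty, then E₀ is homeomorphic either to the Cantor set or to the Cantor set with one point removed. -/
open PiNat Set Function

namespace Reichbach

abbrev Cant := ℕ → Bool

lemma perfect_nhds_exists {C : Set Cant} (hC : Perfect C) {x : Cant} (hx : x ∈ C)
    {U : Set Cant} (hU : U ∈ nhds x) : ∃ y ∈ U ∩ C, y ≠ x :=
  preperfect_iff_nhds.1 hC.acc x hx U hU

/-- Splitting lemma. -/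
lemma split {C : Set Cant} (hC : Perfect C) {x : Cant} (n : ℕ) (hx : x ∈ C) :
    ∃ M z, n ≤ M ∧ z ∈ C ∧ z ∈ cylinder x M ∧ z M ≠ x M ∧
      C ∩ cylinder x n ⊆ cylinder x M := by
  have hcylnhds : cylinder x n ∈ nhds x :=
    (isOpen_cylinder _ x n).mem_nhds (self_mem_cylinder x n)
  obtain ⟨y, ⟨hyc, hyC⟩, hyx⟩ := perfect_nhds_exists hC hx hcylnhds
  have hex : ∃ m, ¬ (C ∩ cylinder x n ⊆ cylinder x (m + 1)) := by
    refine ⟨firstDiff y x, fun h => ?_⟩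
    have := h ⟨hyC, hyc⟩
    rw [mem_cylinder_iff_le_firstDiff hyx] at this
    omega
  classical
  set M := Nat.find hex with hMdef
  have hMspec : ¬ (C ∩ cylinder x n ⊆ cylinder x (M + 1)) := Nat.find_spec hex
  have hmin : ∀ m < M, C ∩ cylinder x n ⊆ cylinder x (m + 1) := fun m hm => by
    by_contra h; exact absurd (Nat.find_le h) (Nat.not_le.2 hm)
  have hnM : n ≤ M := by
    by_contra h
    exact hMspec (fun w hw => cylinder_anti x (by omega) hw.2)
  have hsub : C ∩ cylinder x n ⊆ cylinder x M := by
    rcases Nat.eq_zero_or_pos M with h0 | hpos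
    · rw [h0, cylinder_zero]; exact subset_univ _
    · have := hmin (M - 1) (by omega)
      rwa [Nat.sub_add_cancel hpos] at this
  obtain ⟨z, hz, hznot⟩ := not_subset.1 hMspec
  refine ⟨M, z, hnM, hz.1, hsub hz, ?_, hsub⟩
  intro hzM
  apply hznot
  intro i hi
  rcases Nat.lt_succ_iff_lt_or_eq.1 hi with h | h
  · exact hsub hz i h
  · rw [h]; exact hzM


variable (C : Set Cant)

/-- The set attached to a node `(x, n)`. -/
def Dset (p : Cant × ℕ) : Set Cant := C ∩ cylinder p.1 p.2

noncomputable def spl (x : Cant) (n : ℕ) : ℕ × Cant := by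
  classical
  exact if h : ∃ M z, n ≤ M ∧ z ∈ C ∧ z ∈ cylinder x M ∧ z M ≠ x M ∧
      C ∩ cylinder x n ⊆ cylinder x M
    then (h.choose, h.choose_spec.choose) else (n, x)

lemma spl_spec {C : Set Cant} (hC : Perfect C) {x : Cant} (n : ℕ) (hx : x ∈ C) :
    n ≤ (spl C x n).1 ∧ (spl C x n).2 ∈ C ∧ (spl C x n).2 ∈ cylinder x (spl C x n).1 ∧
      (spl C x n).2 (spl C x n).1 ≠ x (spl C x n).1 ∧
      C ∩ cylinder x n ⊆ cylinder x (spl C x n).1 := by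
  classical
  have h := split hC n hx
  rw [spl, dif_pos h]
  exact h.choose_spec.choose_spec

/-- children of a node -/
noncomputable def child (p : Cant × ℕ) (b : Bool) : Cant × ℕ :=
  if b then ((spl C p.1 p.2).2, (spl C p.1 p.2).1 + 1)
  else (p.1, (spl C p.1 p.2).1 + 1)

section
variable {C : Set Cant} (hC : Perfect C)
include hC

lemma child_mem {p : Cant × ℕ} (hp : p.1 ∈ C) (b : Bool) : (child C p b).1 ∈ C := by
  cases b <;> simp only [child, if_true, if_false, Bool.false_eq_true, reduceIte]
  · exact hp
  · exact (spl_spec hC p.2 hp).2.1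

lemma child_level {p : Cant × ℕ} (hp : p.1 ∈ C) (b : Bool) : p.2 < (child C p b).2 := by
  have := (spl_spec hC p.2 hp).1
  cases b <;> simp only [child, if_true, if_false, Bool.false_eq_true, reduceIte] <;> omega

lemma child_center_mem {p : Cant × ℕ} (hp : p.1 ∈ C) (b : Bool) :
    (child C p b).1 ∈ cylinder p.1 p.2 := by
  obtain ⟨h1, h2, h3, h4, h5⟩ := spl_spec hC p.2 hp
  cases b <;> simp only [child, if_true, if_false, Bool.false_eq_true, reduceIte]
  · exact self_mem_cylinder _ _
  · exact cylinder_anti _ h1 h3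

lemma child_subset {p : Cant × ℕ} (hp : p.1 ∈ C) (b : Bool) :
    Dset C (child C p b) ⊆ Dset C p := by
  obtain ⟨h1, h2, h3, h4, h5⟩ := spl_spec hC p.2 hp
  rintro w ⟨hwC, hw⟩
  refine ⟨hwC, ?_⟩
  cases b <;> simp only [child, if_true, if_false, Bool.false_eq_true, reduceIte] at hw
  · exact cylinder_anti _ (by omega) hw
  · -- w ∈ cylinder z (M+1) ⊆ cylinder z M = cylinder x M ⊆ cylinder x n
    have : w ∈ cylinder (spl C p.1 p.2).2 (spl C p.1 p.2).1 := cylinder_anti _ (by omega) hw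
    rw [mem_cylinder_iff_eq.1 h3] at this
    exact cylinder_anti _ h1 this

lemma child_disjoint {p : Cant × ℕ} (hp : p.1 ∈ C) :
    Dset C (child C p false) ∩ Dset C (child C p true) = ∅ := by
  obtain ⟨h1, h2, h3, h4, h5⟩ := spl_spec hC p.2 hp
  ext w
  simp only [mem_inter_iff, mem_empty_iff_false, iff_false, not_and]
  rintro ⟨-, hwf⟩ ⟨-, hwt⟩
  simp only [child, if_true, if_false, Bool.false_eq_true, reduceIte] at hwf hwt
  have e1 : w (spl C p.1 p.2).1 = p.1 (spl C p.1 p.2).1 := hwf _ (by omega)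
  have e2 : w (spl C p.1 p.2).1 = (spl C p.1 p.2).2 (spl C p.1 p.2).1 := hwt _ (by omega)
  exact h4 (e2 ▸ e1)

lemma child_cover {p : Cant × ℕ} (hp : p.1 ∈ C) :
    Dset C p ⊆ Dset C (child C p false) ∪ Dset C (child C p true) := by
  obtain ⟨h1, h2, h3, h4, h5⟩ := spl_spec hC p.2 hp
  rintro w hw
  have hwM : w ∈ cylinder p.1 (spl C p.1 p.2).1 := h5 hw
  by_cases hb : w (spl C p.1 p.2).1 = p.1 (spl C p.1 p.2).1
  · left
    refine ⟨hw.1, ?_⟩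
    simp only [child, Bool.false_eq_true, reduceIte]
    intro i hi
    rcases Nat.lt_succ_iff_lt_or_eq.1 hi with h | h
    · exact hwM i h
    · rw [h]; exact hb
  · right
    refine ⟨hw.1, ?_⟩
    simp only [child, reduceIte]
    intro i hi
    rcases Nat.lt_succ_iff_lt_or_eq.1 hi with h | h
    · rw [hwM i h]; exact (h3 i h).symm
    · rw [h]
      revert hb h4
      cases w (spl C p.1 p.2).1 <;> cases p.1 (spl C p.1 p.2).1 <;>
        cases (spl C p.1 p.2).2 (spl C p.1 p.2).1 <;> simp

end


noncomputable def node (x0 : Cant) (a : Cant) : ℕ → Cant × ℕ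
  | 0 => (x0, 0)
  | k + 1 => child C (node x0 a k) (a k)

section
variable {C : Set Cant} (hC : Perfect C) {x0 : Cant} (hx0 : x0 ∈ C)
include hC hx0

lemma node_mem (a : Cant) (k : ℕ) : (node C x0 a k).1 ∈ C := by
  induction k with
  | zero => exact hx0
  | succ k ih => exact child_mem hC ih _

lemma node_level_mono (a : Cant) {k m : ℕ} (h : k ≤ m) :
    (node C x0 a k).2 ≤ (node C x0 a m).2 := by
  induction m with
  | zero => simp_all
  | succ m ih =>
    rcases Nat.lt_succ_iff_lt_or_eq.1 (Nat.lt_succ_of_le h) with h' | h'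
    · exact le_trans (ih (by omega)) (le_of_lt (child_level hC (node_mem hC hx0 a m) _))
    · rw [h']

lemma node_level_ge (a : Cant) (k : ℕ) : k ≤ (node C x0 a k).2 := by
  induction k with
  | zero => exact Nat.zero_le _
  | succ k ih => exact lt_of_le_of_lt ih (child_level hC (node_mem hC hx0 a k) _)

lemma node_center_chain (a : Cant) {k m : ℕ} (h : k ≤ m) :
    (node C x0 a m).1 ∈ cylinder (node C x0 a k).1 (node C x0 a k).2 := by
  induction m with
  | zero => rw [Nat.le_zero.1 h]; exact self_mem_cylinder _ _
  | succ m ih =>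
    rcases Nat.lt_succ_iff_lt_or_eq.1 (Nat.lt_succ_of_le h) with h' | h'
    · have h1 := ih (by omega)
      have h2 := child_center_mem hC (node_mem hC hx0 a m) (a m)
      intro i hi
      have : i < (node C x0 a m).2 := lt_of_lt_of_le hi (node_level_mono hC hx0 a (by omega))
      show (child C (node C x0 a m) (a m)).1 i = _
      rw [h2 i this, h1 i hi]
    · rw [h']; exact self_mem_cylinder _ _

lemma node_subset_chain (a : Cant) {k m : ℕ} (h : k ≤ m) :
    Dset C (node C x0 a m) ⊆ Dset C (node C x0 a k) := by
  induction m with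
  | zero => rw [Nat.le_zero.1 h]
  | succ m ih =>
    rcases Nat.lt_succ_iff_lt_or_eq.1 (Nat.lt_succ_of_le h) with h' | h'
    · exact (child_subset hC (node_mem hC hx0 a m) _).trans (ih (by omega))
    · rw [h']

end

/-- The limit map. -/
noncomputable def limmap (x0 : Cant) (a : Cant) : Cant :=
  fun i => (node C x0 a (i + 1)).1 i

section
variable {C : Set Cant} (hC : Perfect C) {x0 : Cant} (hx0 : x0 ∈ C)
include hC hx0

lemma limmap_mem_cylinder (a : Cant) (k : ℕ) :
    limmap C x0 a ∈ cylinder (node C x0 a k).1 (node C x0 a k).2 := by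
  intro i hi
  rcases le_or_gt (i + 1) k with h | h
  · have h1 := node_center_chain hC hx0 a h
    show (node C x0 a (i+1)).1 i = (node C x0 a k).1 i
    exact (h1 i (lt_of_lt_of_le (Nat.lt_succ_self i) (node_level_ge hC hx0 a (i + 1)))).symm
  · have h1 := node_center_chain hC hx0 a (le_of_lt h)
    exact h1 i hi

lemma limmap_mem (a : Cant) : limmap C x0 a ∈ C := by
  have htend : Filter.Tendsto (fun m => (node C x0 a m).1) Filter.atTop
      (nhds (limmap C x0 a)) := by
    rw [tendsto_pi_nhds]
    intro i
    apply Filter.Tendsto.congr' (f₁ := fun _ => limmap C x0 a i)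
    · filter_upwards [Filter.eventually_ge_atTop (i + 1)] with m hm
      exact ((limmap_mem_cylinder hC hx0 a m) i
        (lt_of_lt_of_le (Nat.lt_succ_self i) ((node_level_ge hC hx0 a (i+1)).trans
          (node_level_mono hC hx0 a hm))))
    · exact tendsto_const_nhds
  exact hC.closed.mem_of_tendsto htend
    (Filter.Eventually.of_forall fun m => node_mem hC hx0 a m)

lemma limmap_mem_Dset (a : Cant) (k : ℕ) : limmap C x0 a ∈ Dset C (node C x0 a k) :=
  ⟨limmap_mem hC hx0 a, limmap_mem_cylinder hC hx0 a k⟩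

omit hC hx0 in
lemma node_congr {a a' : Cant} (k : ℕ) (h : ∀ j < k, a j = a' j) :
    node C x0 a k = node C x0 a' k := by
  induction k with
  | zero => rfl
  | succ k ih =>
    show child C (node C x0 a k) (a k) = child C (node C x0 a' k) (a' k)
    rw [ih (fun j hj => h j (by omega)), h k (Nat.lt_succ_self k)]

lemma limmap_inj : Function.Injective (limmap C x0) := by
  intro a a' hEq
  by_contra hne
  have hex : ∃ k, a k ≠ a' k := by
    by_contra h; push_neg at h; exact hne (funext h)
  classical
  set k := Nat.find hex with hk
  have hkspec : a k ≠ a' k := Nat.find_spec hex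
  have hbelow : ∀ j < k, a j = a' j := fun j hj => by
    by_contra h; exact absurd (Nat.find_le h) (Nat.not_le.2 hj)
  have hnodeq : node C x0 a k = node C x0 a' k := node_congr k hbelow
  have hm1 : limmap C x0 a ∈ Dset C (child C (node C x0 a k) (a k)) :=
    limmap_mem_Dset hC hx0 a (k + 1)
  have hm2 : limmap C x0 a ∈ Dset C (child C (node C x0 a k) (a' k)) := by
    rw [hnodeq, hEq]
    exact limmap_mem_Dset hC hx0 a' (k + 1)
  have hdisj := child_disjoint hC (p := node C x0 a k) (node_mem hC hx0 a k)
  have : limmap C x0 a ∈ (∅ : Set Cant) := by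
    rw [← hdisj]
    cases hak : a k <;> cases hak' : a' k <;>
        rw [hak] at hm1 <;> rw [hak'] at hm2 <;> rw [hak, hak'] at hkspec <;>
      first
        | exact absurd rfl hkspec
        | exact ⟨hm1, hm2⟩
        | exact ⟨hm2, hm1⟩
  exact this

end


/-- Tracing bit: which child contains `w`. -/
noncomputable def nbit (w : Cant) (p : Cant × ℕ) : Bool := by
  classical exact decide (w ∈ Dset C (child C p true))

noncomputable def trace (x0 w : Cant) : ℕ → Cant × ℕ
  | 0 => (x0, 0)
  | k + 1 => child C (trace x0 w k) (nbit C w (trace x0 w k))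

noncomputable def abit (x0 w : Cant) : Cant := fun k => nbit C w (trace C x0 w k)

section
variable {C : Set Cant} (hC : Perfect C) {x0 : Cant} (hx0 : x0 ∈ C)

omit hC hx0 in
lemma node_abit_eq_trace (w : Cant) (k : ℕ) :
    node C x0 (abit C x0 w) k = trace C x0 w k := by
  induction k with
  | zero => rfl
  | succ k ih =>
    show child C (node C x0 (abit C x0 w) k) (abit C x0 w k) = _
    rw [ih]; rfl

include hC hx0 in
lemma mem_trace {w : Cant} (hw : w ∈ C) (k : ℕ) : w ∈ Dset C (trace C x0 w k) := by
  induction k with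
  | zero => exact ⟨hw, by show w ∈ cylinder x0 0; simp [cylinder_zero]⟩
  | succ k ih =>
    have hcenter : (trace C x0 w k).1 ∈ C := by
      rw [← node_abit_eq_trace]; exact node_mem hC hx0 _ k
    have hcov := child_cover hC (p := trace C x0 w k) hcenter ih
    show w ∈ Dset C (child C (trace C x0 w k) (nbit C w (trace C x0 w k)))
    classical
    by_cases h : w ∈ Dset C (child C (trace C x0 w k) true)
    · have : nbit C w (trace C x0 w k) = true := by simp [nbit, h]
      rw [this]; exact h
    · have : nbit C w (trace C x0 w k) = false := by simp [nbit, h]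
      rw [this]
      rcases hcov with h' | h'
      · exact h'
      · exact absurd h' h

include hC hx0 in
lemma limmap_surj {w : Cant} (hw : w ∈ C) : limmap C x0 (abit C x0 w) = w := by
  funext i
  have h1 := limmap_mem_cylinder hC hx0 (abit C x0 w) (i + 1)
  have h2 := mem_trace hC hx0 hw (i + 1)
  rw [← node_abit_eq_trace] at h2
  have hlev : i < (node C x0 (abit C x0 w) (i + 1)).2 :=
    lt_of_lt_of_le (Nat.lt_succ_self i) (node_level_ge hC hx0 _ (i + 1))
  rw [h1 i hlev, h2.2 i hlev]

include hC hx0 in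
lemma limmap_cylinder_map {a a' : Cant} {n : ℕ} (h : a' ∈ cylinder a n) :
    limmap C x0 a' ∈ cylinder (limmap C x0 a) n := by
  have hnode : node C x0 a' n = node C x0 a n :=
    node_congr n (fun j hj => h j hj)
  intro i hi
  have hlev : i < (node C x0 a n).2 := lt_of_lt_of_le hi (node_level_ge hC hx0 a n)
  have e1 := limmap_mem_cylinder hC hx0 a n i hlev
  have e2 := limmap_mem_cylinder hC hx0 a' n i (hnode ▸ hlev)
  rw [e1, ← hnode, e2]

include hC hx0 in
lemma limmap_continuous : Continuous (limmap C x0) := by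
  rw [(isTopologicalBasis_cylinders (fun _ : ℕ => Bool)).continuous_iff]
  rintro s ⟨y, n, rfl⟩
  rw [isOpen_iff_forall_mem_open]
  intro a ha
  refine ⟨cylinder a n, fun a' ha' => ?_, isOpen_cylinder _ a n, self_mem_cylinder a n⟩
  simp only [mem_preimage] at ha ⊢
  have := limmap_cylinder_map hC hx0 ha'
  rw [mem_cylinder_iff_eq] at this ha ⊢
  exact this.trans ha

end

/-- Brouwer's theorem in the Cantor space: every nonempty closed perfect subset of
`ℕ → Bool` is homeomorphic to the whole space. -/
theorem cantor_homeo {C : Set Cant} (hC : Perfect C) (hne : C.Nonempty) :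
    Nonempty (Cant ≃ₜ ↥C) := by
  obtain ⟨x0, hx0⟩ := hne
  have hbij : Function.Bijective (fun a => (⟨limmap C x0 a, limmap_mem hC hx0 a⟩ : ↥C)) := by
    constructor
    · intro a a' h
      exact limmap_inj hC hx0 (congrArg Subtype.val h)
    · rintro ⟨w, hw⟩
      exact ⟨abit C x0 w, Subtype.ext (limmap_surj hC hx0 hw)⟩
  have hcont : Continuous (fun a => (⟨limmap C x0 a, limmap_mem hC hx0 a⟩ : ↥C)) :=
    (limmap_continuous hC hx0).subtype_mk _
  exact ⟨@Continuous.homeoOfEquivCompactToT2 _ _ _ _ _ _ (Equiv.ofBijective _ hbij) hcont⟩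


/-- Gluing: a space partitioned into relatively open pieces is the topological sum. -/
lemma sigma_homeo {X : Type*} [TopologicalSpace X] {ι : Type*} (S : Set X) (K : ι → Set X)
    (hK : ∀ i, ∃ U, IsOpen U ∧ K i = U ∩ S) (hdisj : Pairwise (Disjoint on K))
    (hcover : ⋃ i, K i = S) : Nonempty ((Σ i, ↥(K i)) ≃ₜ ↥S) := by
  classical
  have hKS : ∀ i, K i ⊆ S := fun i => by
    obtain ⟨U, -, hU⟩ := hK i; rw [hU]; exact inter_subset_right
  let F : (Σ i, ↥(K i)) → ↥S := fun p => ⟨p.2.1, hKS p.1 p.2.2⟩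
  have hbij : Function.Bijective F := by
    constructor
    · rintro ⟨i, x, hx⟩ ⟨j, y, hy⟩ h
      have hxy : x = y := congrArg Subtype.val h
      subst hxy
      have hij : i = j := by
        by_contra hij
        exact (hdisj hij).ne_of_mem hx hy rfl
      subst hij; rfl
    · rintro ⟨x, hx⟩
      rw [← hcover] at hx
      obtain ⟨s, ⟨i, rfl⟩, hxs⟩ := hx
      exact ⟨⟨i, x, hxs⟩, rfl⟩
  have hcont : Continuous F := by
    apply continuous_sigma
    intro i
    exact Continuous.subtype_mk (continuous_subtype_val) _
  have hopen : IsOpenMap F := by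
    rw [isOpenMap_sigma]
    intro i
    have : (fun a : ↥(K i) => F ⟨i, a⟩) = Set.inclusion (hKS i) := rfl
    rw [this]
    obtain ⟨U, hUopen, hU⟩ := hK i
    have hemb : Topology.IsEmbedding (Set.inclusion (hKS i)) :=
      Topology.IsEmbedding.inclusion _
    have hrange : IsOpen (range (Set.inclusion (hKS i))) := by
      rw [Set.range_inclusion]
      have : {x : ↥S | ↑x ∈ K i} = (Subtype.val : ↥S → X) ⁻¹' U := by
        ext ⟨x, hxS⟩
        simp only [mem_setOf_eq, mem_preimage, hU, mem_inter_iff]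
        exact ⟨fun h => h.1, fun h => ⟨h, hxS⟩⟩
      rw [this]
      exact hUopen.preimage continuous_subtype_val
    exact (Topology.IsOpenEmbedding.mk hemb hrange).isOpenMap
  exact ⟨Equiv.toHomeomorphOfContinuousOpen (Equiv.ofBijective F hbij) hcont hopen⟩

/-- Fiberwise homeomorphism of sigma types. -/
def sigmaCongrFiber {ι : Type*} {X : ι → Type*} {Y : Type*} [∀ i, TopologicalSpace (X i)]
    [TopologicalSpace Y] (F : ∀ i, X i ≃ₜ Y) : (Σ _ : ι, Y) ≃ₜ (Σ i, X i) := by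
  refine Equiv.toHomeomorphOfContinuousOpen
    (Equiv.sigmaCongrRight fun i => (F i).symm.toEquiv) ?_ ?_
  · exact continuous_sigma fun i => (continuous_sigmaMk.comp (F i).symm.continuous)
  · rw [isOpenMap_sigma]
    exact fun i => (isOpenMap_sigmaMk).comp (F i).symm.isOpenMap

/-- For a discrete index, the constant sigma is the product. -/
def sigmaHomeoProd (ι Y : Type*) [TopologicalSpace ι] [DiscreteTopology ι]
    [TopologicalSpace Y] : (Σ _ : ι, Y) ≃ₜ ι × Y := by
  refine Equiv.toHomeomorphOfContinuousOpen (Equiv.sigmaEquivProd ι Y) ?_ ?_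
  · exact continuous_sigma fun i => (continuous_const.prodMk continuous_id)
  · rw [isOpenMap_sigma]
    intro i O hO
    have : (fun a : Y => (Equiv.sigmaEquivProd ι Y) ⟨i, a⟩) '' O = {i} ×ˢ O := by
      ext ⟨j, y⟩
      simp [Equiv.sigmaEquivProd, eq_comm, and_comm]
    rw [this]
    exact (isOpen_discrete _).prod hO

/-- An equiv of discrete spaces is a homeomorphism. -/
def discreteHomeo {ι κ : Type*} [TopologicalSpace ι] [DiscreteTopology ι]
    [TopologicalSpace κ] [DiscreteTopology κ] (e : ι ≃ κ) : ι ≃ₜ κ :=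
  { e with
    continuous_toFun := continuous_of_discreteTopology
    continuous_invFun := continuous_of_discreteTopology }


lemma isClosed_cylinder (x : Cant) (n : ℕ) : IsClosed (cylinder x n) := by
  rw [cylinder_eq_pi]; exact isClosed_set_pi fun i _ => isClosed_discrete _

lemma perfect_cylinder (x : Cant) (n : ℕ) : Perfect (cylinder x n) := by
  refine ⟨isClosed_cylinder x n, ?_⟩
  rw [preperfect_iff_nhds]
  intro y hy U hU
  obtain ⟨v, ⟨z, m, rfl⟩, hyv, hvU⟩ :=
    (isTopologicalBasis_cylinders (fun _ : ℕ => Bool)).mem_nhds_iff.1 hU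
  set N := max n m with hN
  refine ⟨Function.update y N (!(y N)), ⟨hvU ?_, ?_⟩, ?_⟩
  · intro i hi
    rw [Function.update_of_ne (by omega : i ≠ N)]
    exact hyv i hi
  · intro i hi
    rw [Function.update_of_ne (by omega : i ≠ N)]
    exact hy i hi
  · intro h
    have := congrFun h N
    rw [Function.update_self] at this
    exact Bool.not_ne_self (y N) this

/-- Assembling a decomposed set into `ℕ × Cant`. -/
lemma homeo_nat_prod {ι : Type*} (e : ι ≃ ℕ) {X : Type*} [TopologicalSpace X]
    (S : Set X) (K : ι → Set X)
    (hK : ∀ i, ∃ U, IsOpen U ∧ K i = U ∩ S) (hdisj : Pairwise (Disjoint on K))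
    (hcover : ⋃ i, K i = S) (hfib : ∀ i, Nonempty (Cant ≃ₜ ↥(K i))) :
    Nonempty (↥S ≃ₜ ℕ × Cant) := by
  classical
  letI : TopologicalSpace ι := ⊥
  haveI : DiscreteTopology ι := ⟨rfl⟩
  obtain ⟨G⟩ := sigma_homeo S K hK hdisj hcover
  have F : ∀ i, ↥(K i) ≃ₜ Cant := fun i => (Classical.choice (hfib i)).symm
  exact ⟨G.symm.trans ((sigmaCongrFiber F).symm.trans
    ((sigmaHomeoProd ι Cant).trans ((discreteHomeo e).prodCongr (Homeomorph.refl Cant))))⟩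

/-- The punctured-Cantor pieces. -/
def pt0 : Cant := fun _ => false

def en (n : ℕ) : Cant := fun i => decide (i = n)

def Kpt (n : ℕ) : Set Cant := cylinder (en n) (n + 1)

lemma Kpt_subset (n : ℕ) : Kpt n ⊆ {x : Cant | x ≠ pt0} := by
  intro x hx h
  have h1 : x n = en n n := hx n (Nat.lt_succ_self n)
  rw [h] at h1
  simp [pt0, en] at h1

lemma punctured_homeo : Nonempty (↥{x : Cant | x ≠ pt0} ≃ₜ ℕ × Cant) := by
  apply homeo_nat_prod (Equiv.refl ℕ) _ Kpt
  · intro n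
    exact ⟨Kpt n, isOpen_cylinder _ _ _,
      (inter_eq_self_of_subset_left (Kpt_subset n)).symm⟩
  · intro m n hmn
    rw [Function.onFun, Set.disjoint_left]
    intro x hxm hxn
    rcases Nat.lt_or_ge m n with h | h
    · have h1 : x m = en m m := hxm m (Nat.lt_succ_self m)
      have h2 : x m = en n m := hxn m (by omega)
      rw [h1] at h2
      simp only [en, decide_eq_true_eq] at h2
      revert h2; simp; omega
    · have h' : n < m := by omega
      have h1 : x n = en n n := hxn n (Nat.lt_succ_self n)
      have h2 : x n = en m n := hxm n (by omega)
      rw [h1] at h2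
      simp only [en, decide_eq_true_eq] at h2
      revert h2; simp; omega
  · ext x
    simp only [mem_iUnion, mem_setOf_eq]
    constructor
    · rintro ⟨n, hn⟩ h
      exact Kpt_subset n hn h
    · intro hx
      have hex : ∃ n, x n = true := by
        by_contra h; push_neg at h
        exact hx (funext fun n => by
          have := h n; revert this; cases x n <;> simp [pt0])
      classical
      refine ⟨Nat.find hex, fun i hi => ?_⟩
      rcases Nat.lt_succ_iff_lt_or_eq.1 hi with h | h
      · have hxi : ¬ x i = true := fun hc => absurd (Nat.find_le hc) (Nat.not_le.2 h)
        have h1 : x i = false := by revert hxi; cases x i <;> simp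
        have h2 : decide (i = Nat.find hex) = false := by
          simp only [decide_eq_false_iff_not]; omega
        rw [h1, en, h2]
      · rw [h, Nat.find_spec hex, en]
        simp
  · intro n
    apply cantor_homeo (perfect_cylinder _ _)
    exact ⟨en n, self_mem_cylinder _ _⟩


/-- List-indexed cylinders. -/
def LC (l : List Bool) : Set Cant := {y | res y l.length = l}

lemma LC_clopen (l : List Bool) : IsOpen (LC l) ∧ IsClosed (LC l) := by
  rcases eq_empty_or_nonempty (LC l) with h | ⟨y, hy⟩
  · rw [h]; exact ⟨isOpen_empty, isClosed_empty⟩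
  · have : LC l = cylinder y l.length := by
      rw [cylinder_eq_res]
      ext y'
      simp only [LC, mem_setOf_eq]
      rw [show res y l.length = l from hy]
    rw [this]
    exact ⟨isOpen_cylinder _ _ _, isClosed_cylinder _ _⟩

lemma LC_res (x : Cant) (n : ℕ) : LC (res x n) = cylinder x n := by
  rw [cylinder_eq_res]
  ext y
  simp only [LC, mem_setOf_eq, res_length]

end Reichbach

open PiNat Set Reichbach in
/-- (Reichbach) If `E₀` is a nonempty perfect subset of the Cantor set (here the Cantor
space `ℕ → Bool`) which is open in its closure, then `E₀` is homeomorphic either to the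
Cantor set or to the Cantor set with one point removed. -/
theorem perfect_open_in_closure_homeomorphic_cantor_or_cantor_minus_point
    (E₀ : Set (ℕ → Bool)) (hne : E₀.Nonempty) (hperf : Preperfect E₀)
    (hopen : ∃ U : Set (ℕ → Bool), IsOpen U ∧ E₀ = U ∩ closure E₀) :
    Nonempty (E₀ ≃ₜ (ℕ → Bool)) ∨
      Nonempty (E₀ ≃ₜ {x : ℕ → Bool // x ≠ fun _ => false}) := by
  classical
  by_cases hcl : IsClosed E₀
  · left
    obtain ⟨G⟩ := cantor_homeo ⟨hcl, hperf⟩ hne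
    exact ⟨G.symm⟩
  · right
    obtain ⟨U, hUopen, hE⟩ := hopen
    set C := closure E₀ with hC
    have hCperf : Perfect C := hperf.perfect_closure
    obtain ⟨g, hg⟩ := exists_surjective_nat (List Bool)
    set V : ℕ → Set Cant := fun n => if LC (g n) ⊆ U then LC (g n) else ∅ with hV
    have hVclopen : ∀ n, IsOpen (V n) ∧ IsClosed (V n) := fun n => by
      rw [hV]
      simp only
      split
      · exact LC_clopen (g n)
      · exact ⟨isOpen_empty, isClosed_empty⟩
    have hVsub : ∀ n, V n ⊆ U := fun n => by
      rw [hV]; simp only; split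
      · assumption
      · exact empty_subset _
    have hVcover : ⋃ n, V n = U := by
      apply subset_antisymm (iUnion_subset hVsub)
      intro x hx
      obtain ⟨v, ⟨z, m, rfl⟩, hxv, hvU⟩ :=
        (isTopologicalBasis_cylinders (fun _ : ℕ => Bool)).mem_nhds_iff.1
          (hUopen.mem_nhds hx)
      have hcyl : cylinder x m ⊆ U := by
        rw [mem_cylinder_iff_eq.1 hxv]; exact hvU
      obtain ⟨n, hn⟩ := hg (res x m)
      refine mem_iUnion.2 ⟨n, ?_⟩
      rw [hV]
      simp only
      rw [hn, LC_res, if_pos hcyl]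
      exact self_mem_cylinder x m
    set W : ℕ → Set Cant := disjointed V with hW
    have hpsclopen : ∀ n, IsOpen (partialSups V n) ∧ IsClosed (partialSups V n) := by
      intro n
      induction n with
      | zero => rw [partialSups_zero]; exact hVclopen 0
      | succ n ih =>
        rw [partialSups_add_one]
        exact ⟨ih.1.union (hVclopen (n+1)).1, ih.2.union (hVclopen (n+1)).2⟩
    have hWclopen : ∀ n, IsOpen (W n) ∧ IsClosed (W n) := by
      intro n
      cases n with
      | zero => rw [hW, disjointed_zero]; exact hVclopen 0
      | succ n =>
        rw [hW, disjointed_add_one]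
        exact ⟨(hVclopen (n+1)).1.sdiff (hpsclopen n).2,
          (hVclopen (n+1)).2.sdiff (hpsclopen n).1⟩
    set K : ℕ → Set Cant := fun n => W n ∩ C with hK
    have hKsub : ∀ n, K n ⊆ E₀ := fun n => by
      rw [hE]
      exact inter_subset_inter_left _ ((disjointed_subset V n).trans (hVsub n))
    have hKrel : ∀ n, K n = W n ∩ E₀ := fun n => by
      apply subset_antisymm
      · exact subset_inter inter_subset_left (hKsub n)
      · exact inter_subset_inter_right _ (hE ▸ inter_subset_right)
    have hKcover : ⋃ n, K n = E₀ := by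
      rw [hK, ← iUnion_inter, iUnion_disjointed, hVcover, hE]
    have hKdisj : Pairwise (Disjoint on K) := fun m n hmn =>
      ((disjoint_disjointed V) hmn).mono inter_subset_left inter_subset_left
    have hKclosed : ∀ n, IsClosed (K n) := fun n =>
      (hWclopen n).2.inter isClosed_closure
    have hKperf : ∀ n, (K n).Nonempty → Perfect (K n) := fun n hn =>
      ⟨hKclosed n, hCperf.acc.open_inter (hWclopen n).1⟩
    set S : Set ℕ := {n | (K n).Nonempty} with hS
    have hScover : ⋃ n ∈ S, K n = E₀ := by
      rw [← hKcover]
      apply subset_antisymm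
      · exact iUnion₂_subset fun n _ => subset_iUnion K n
      · intro x hx
        obtain ⟨n, hn⟩ := mem_iUnion.1 hx
        exact mem_iUnion₂.2 ⟨n, ⟨x, hn⟩, hn⟩
    have hSinf : S.Infinite := by
      intro hSfin
      apply hcl
      rw [← hScover]
      exact hSfin.isClosed_biUnion fun n _ => hKclosed n
    haveI : Infinite ↥S := infinite_coe_iff.2 hSinf
    obtain ⟨enc⟩ := nonempty_encodable ↥S
    letI := enc
    letI := Denumerable.ofEncodableOfInfinite ↥S
    obtain ⟨G1⟩ := homeo_nat_prod (Denumerable.eqv ↥S) E₀ (fun s : ↥S => K s.1)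
      (fun s => ⟨W s.1, (hWclopen s.1).1, hKrel s.1⟩)
      (fun s t hst => hKdisj (fun h => hst (Subtype.ext h)))
      (by
        rw [← hScover]
        ext x
        simp only [mem_iUnion]
        exact ⟨fun ⟨s, hs⟩ => ⟨s.1, s.2, hs⟩, fun ⟨n, hn, hx⟩ => ⟨⟨n, hn⟩, hx⟩⟩)
      (fun s => cantor_homeo (hKperf s.1 s.2) s.2)
    obtain ⟨G2⟩ := punctured_homeo
    exact ⟨G1.trans G2.symm⟩
end

section
/- Any locally-𝒩 topological space is regular: if X is a Hausdorff second countable space with a basis of open sets U each homeomorphic to ℝ² \ ℚ² and with frontier ∂U homeomorphic to the circle S¹, then X is a regular topological space. -/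
/-- Any locally-`𝒩` space is regular: if `X` is a Hausdorff second countable space with a
basis of open sets `U` each homeomorphic to `ℝ² \ ℚ²` and with frontier homeomorphic to
the circle `S¹`, then `X` is regular. -/
theorem locally_N_space_regular (X : Type*) [TopologicalSpace X] [T2Space X]
    [SecondCountableTopology X] (B : Set (Set X))
    (hB : TopologicalSpace.IsTopologicalBasis B)
    (hN : ∀ U ∈ B, Nonempty
      (U ≃ₜ {p : ℝ × ℝ | ¬ ((∃ a : ℚ, (a : ℝ) = p.1) ∧ (∃ b : ℚ, (b : ℝ) = p.2))}))
    (hS : ∀ U ∈ B, Nonempty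
      ((frontier U) ≃ₜ (Metric.sphere (0 : EuclideanSpace ℝ (Fin 2)) 1))) :
    RegularSpace X := by
  apply RegularSpace.of_exists_mem_nhds_isClosed_subset
  intro x V hV
  have hV' : interior V ∈ nhds x := interior_mem_nhds.mpr hV
  obtain ⟨U, hUB, hxU, hUV⟩ := hB.mem_nhds_iff.mp hV'
  have hUopen := hB.isOpen hUB
  have hK : IsCompact (frontier U) := by
    obtain ⟨e⟩ := hS U hUB
    have : CompactSpace (frontier U) := e.symm.compactSpace
    exact isCompact_iff_compactSpace.mpr this
  have hKc : IsCompact (frontier U \ interior V) := hK.diff isOpen_interior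
  have hxK : x ∉ frontier U \ interior V := fun h => h.2 (hUV hxU)
  obtain ⟨W₂, W₁, hW₂o, hW₁o, hKW₂, hxW₁, hdisj⟩ := hKc.separation_of_notMem hxK
  refine ⟨closure (U ∩ W₁), ?_, isClosed_closure, ?_⟩
  · exact Filter.mem_of_superset ((hUopen.inter hW₁o).mem_nhds ⟨hxU, hxW₁⟩) subset_closure
  · intro y hy
    have hyU : y ∈ closure U := closure_mono Set.inter_subset_left hy
    have hyW₂ : y ∉ W₂ := by
      have : Disjoint (closure (U ∩ W₁)) W₂ := by
        refine Disjoint.closure_left ?_ hW₂o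
        exact Set.disjoint_left.mpr fun z hz hz2 =>
          Set.disjoint_left.mp hdisj hz2 hz.2
      exact fun h => Set.disjoint_left.mp this hy h
    rcases (closure_eq_self_union_frontier U ▸ hyU : y ∈ U ∪ frontier U) with h | h
    · exact interior_subset (hUV h)
    · by_cases hyV : y ∈ interior V
      · exact interior_subset hyV
      · exact absurd (hKW₂ ⟨h, hyV⟩) hyW₂
end

section
/- Let A₀ and A₁ be countable dense subsets of ℝ². Then there exists a homeomorphism of ℝ² mapping A₀ onto A₁. -/
open Set BoundedContinuousFunction


lemma dense_between {X : Set ℝ} (hX : Dense X) {a b : ℝ} (h : a < b) :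
    ∃ x ∈ X, a < x ∧ x < b := by
  obtain ⟨x, hx, hx2⟩ := hX.exists_mem_open isOpen_Ioo (nonempty_Ioo.2 h)
  exact ⟨x, hx, hx2.1, hx2.2⟩

lemma dense_lt {X : Set ℝ} (hX : Dense X) (a : ℝ) : ∃ x ∈ X, x < a := by
  obtain ⟨x, hx, _, h2⟩ := dense_between hX (sub_one_lt a); exact ⟨x, hx, h2⟩

lemma dense_gt {X : Set ℝ} (hX : Dense X) (a : ℝ) : ∃ x ∈ X, a < x := by
  obtain ⟨x, hx, h1, _⟩ := dense_between hX (lt_add_one a); exact ⟨x, hx, h1⟩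

lemma extend_orderIso {X Y : Set ℝ} (hX : Dense X) (hY : Dense Y) (φ : ℝ → ℝ)
    (hmono : ∀ x ∈ X, ∀ x' ∈ X, x < x' ↔ φ x < φ x')
    (hsurj : ∀ y ∈ Y, ∃ x ∈ X, φ x = y) :
    ∃ g : ℝ ≃o ℝ, ∀ x ∈ X, g x = φ x := by
  set g : ℝ → ℝ := fun x => sSup (φ '' {z ∈ X | z ≤ x}) with hg
  have hne : ∀ x : ℝ, (φ '' {z ∈ X | z ≤ x}).Nonempty := by
    intro x
    obtain ⟨z, hz, hzx⟩ := dense_lt hX x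
    exact ⟨φ z, ⟨z, ⟨hz, hzx.le⟩, rfl⟩⟩
  have hub : ∀ x : ℝ, ∀ x' ∈ X, x < x' → φ x' ∈ upperBounds (φ '' {z ∈ X | z ≤ x}) := by
    rintro x x' hx' hlt _ ⟨z, ⟨hz, hzx⟩, rfl⟩
    exact (le_of_lt ((hmono z hz x' hx').1 (lt_of_le_of_lt hzx hlt)))
  have hbdd : ∀ x : ℝ, BddAbove (φ '' {z ∈ X | z ≤ x}) := by
    intro x
    obtain ⟨x', hx', hlt⟩ := dense_gt hX x
    exact ⟨φ x', hub x x' hx' hlt⟩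
  have hgX : ∀ x ∈ X, g x = φ x := by
    intro x hx
    refine le_antisymm (csSup_le (hne x) ?_) (le_csSup (hbdd x) ⟨x, ⟨hx, le_rfl⟩, rfl⟩)
    rintro _ ⟨z, ⟨hz, hzx⟩, rfl⟩
    rcases eq_or_lt_of_le hzx with h | h
    · rw [h]
    · exact ((hmono z hz x hx).1 h).le
  have hgsm : StrictMono g := by
    intro x y hxy
    obtain ⟨z, hz, hz1, hz2⟩ := dense_between hX hxy
    obtain ⟨z', hz', hz1', hz2'⟩ := dense_between hX hz2
    calc g x ≤ φ z := csSup_le (hne x) (hub x z hz hz1)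
    _ < φ z' := (hmono z hz z' hz').1 hz1'
    _ ≤ g y := le_csSup (hbdd y) ⟨z', ⟨hz', hz2'.le⟩, rfl⟩
  have hgsurj : Function.Surjective g := by
    intro y
    set S : Set ℝ := {z ∈ X | φ z < y} with hS
    have hSne : S.Nonempty := by
      obtain ⟨w, hw, _, hw2⟩ := dense_between hY (sub_one_lt y)
      obtain ⟨z, hz, hze⟩ := hsurj w hw
      exact ⟨z, hz, hze ▸ hw2⟩
    have hSbdd : BddAbove S := by
      obtain ⟨w, hw, hw1, _⟩ := dense_between hY (lt_add_one y)
      obtain ⟨z'', hz'', hze⟩ := hsurj w hw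
      refine ⟨z'', fun z hzS => ?_⟩
      exact le_of_lt ((hmono z hzS.1 z'' hz'').2 (by rw [hze]; exact hzS.2.trans hw1))
    refine ⟨sSup S, ?_⟩
    rcases lt_trichotomy (g (sSup S)) y with h | h | h
    · exfalso
      obtain ⟨w, hw, hw1, hw2⟩ := dense_between hY h
      obtain ⟨z, hz, hze⟩ := hsurj w hw
      have hzS : z ∈ S := ⟨hz, hze ▸ hw2⟩
      have : φ z ≤ g (sSup S) :=
        le_csSup (hbdd _) ⟨z, ⟨hz, le_csSup hSbdd hzS⟩, rfl⟩
      rw [hze] at this; exact absurd hw1 (not_lt.2 this)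
    · exact h
    · exfalso
      obtain ⟨_, ⟨w, ⟨hw, hwle⟩, rfl⟩, hywz⟩ := exists_lt_of_lt_csSup (hne _) h
      obtain ⟨v, hv, hv1, hv2⟩ := dense_between hY hywz
      obtain ⟨u, hu, hue⟩ := hsurj v hv
      have huw : u < w := (hmono u hu w hw).2 (by rw [hue]; exact hv2)
      have : sSup S ≤ u := csSup_le hSne (fun z hzS =>
        le_of_lt ((hmono z hzS.1 u hu).2 (by rw [hue]; exact hzS.2.trans hv1)))
      exact absurd (lt_of_lt_of_le huw hwle) (not_lt.2 this)
  exact ⟨StrictMono.orderIsoOfSurjective g hgsm hgsurj, hgX⟩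


noncomputable def bump (r δ : ℝ) : ℝ →ᵇ ℝ :=
  BoundedContinuousFunction.mkOfBound
    ⟨fun x => min 1 (max 0 (1 - |x - r| / δ)),
      continuous_const.min (continuous_const.max (continuous_const.sub
        (((continuous_id.sub continuous_const).abs).div_const δ)))⟩ 1
    (by
      intro x y
      have h1 : ∀ z : ℝ, 0 ≤ min 1 (max 0 (1 - |z - r| / δ)) :=
        fun z => le_min zero_le_one (le_max_left _ _)
      have h2 : ∀ z : ℝ, min 1 (max 0 (1 - |z - r| / δ)) ≤ 1 := fun z => min_le_left _ _
      rw [Real.dist_eq, abs_sub_le_iff]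
      constructor <;> simp only [ContinuousMap.coe_mk] <;> linarith [h1 x, h2 x, h1 y, h2 y])

lemma bump_apply (r δ x : ℝ) : bump r δ x = min 1 (max 0 (1 - |x - r| / δ)) := rfl

lemma bump_self (r δ : ℝ) : bump r δ r = 1 := by
  rw [bump_apply]; simp

lemma bump_of_far {r δ x : ℝ} (hδ : 0 < δ) (h : δ ≤ |x - r|) : bump r δ x = 0 := by
  have h0 : 1 - |x - r| / δ ≤ 0 := by
    rw [sub_nonpos, le_div_iff₀ hδ, one_mul]; exact h
  rw [bump_apply, max_eq_left h0, min_eq_right zero_le_one]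

lemma bump_nonneg (r δ x : ℝ) : 0 ≤ bump r δ x := le_min zero_le_one (le_max_left _ _)

lemma bump_le_one (r δ x : ℝ) : bump r δ x ≤ 1 := min_le_left _ _

lemma exists_pos_dist {Z : Set ℝ} (hZ : Z.Finite) {r : ℝ} (hr : r ∉ Z) :
    ∃ δ > 0, ∀ z ∈ Z, δ ≤ |z - r| := by
  rcases Z.eq_empty_or_nonempty with rfl | hne
  · exact ⟨1, one_pos, by simp⟩
  · obtain ⟨z₀, hz₀, hmin⟩ := Set.exists_min_image Z (fun z => |z - r|) hZ hne
    refine ⟨|z₀ - r|, ?_, hmin⟩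
    show 0 < |z₀ - r|
    rw [abs_pos, sub_ne_zero]
    exact fun h => hr (h ▸ hz₀)

lemma modifyF (F : ℝ →ᵇ ℝ) {Z : Set ℝ} (hZ : Z.Finite) {r : ℝ} (v : ℝ) (hr : r ∉ Z) :
    ∃ F' : ℝ →ᵇ ℝ, F' r = v ∧ (∀ z ∈ Z, F' z = F z) ∧ dist F' F ≤ |v - F r| := by
  obtain ⟨δ, hδ, hfar⟩ := exists_pos_dist hZ hr
  refine ⟨F + (v - F r) • bump r δ, ?_, ?_, ?_⟩
  · simp [bump_self]
  · intro z hz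
    simp [bump_of_far hδ (by simpa [abs_sub_comm] using hfar z hz)]
  · rw [BoundedContinuousFunction.dist_le (abs_nonneg _)]
    intro x
    simp only [BoundedContinuousFunction.coe_add, BoundedContinuousFunction.coe_smul,
      Pi.add_apply, Pi.smul_apply, smul_eq_mul, Real.dist_eq, add_sub_cancel_left, abs_mul]
    calc |v - F r| * |bump r δ x| ≤ |v - F r| * 1 := by
          apply mul_le_mul_of_nonneg_left _ (abs_nonneg _)
          rw [abs_of_nonneg (bump_nonneg _ _ _)]; exact bump_le_one _ _ _
    _ = |v - F r| := mul_one _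

lemma isOpen_imp_lt {c : Prop} {r : ℝ} : IsOpen {u : ℝ | c → r < u} := by
  by_cases h : c
  · simpa [h] using isOpen_lt (continuous_const (y := r)) continuous_id
  · simpa [h] using isOpen_univ

lemma isOpen_imp_gt {c : Prop} {r : ℝ} : IsOpen {u : ℝ | c → u < r} := by
  by_cases h : c
  · simpa [h] using isOpen_lt continuous_id (continuous_const (y := r))
  · simpa [h] using isOpen_univ

lemma exists_between_finsets {S T : Set ℝ} (hS : S.Finite) (hT : T.Finite)
    (h : ∀ s ∈ S, ∀ t ∈ T, s < t) : ∃ u, (∀ s ∈ S, s < u) ∧ ∀ t ∈ T, u < t := by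
  rcases S.eq_empty_or_nonempty with rfl | hSne
  · rcases T.eq_empty_or_nonempty with rfl | hTne
    · exact ⟨0, by simp, by simp⟩
    · obtain ⟨t₀, ht₀, hmin⟩ := Set.exists_min_image T id hT hTne
      exact ⟨t₀ - 1, by simp, fun t ht => lt_of_lt_of_le (sub_one_lt t₀) (hmin t ht)⟩
  · obtain ⟨s₀, hs₀, hmax⟩ := Set.exists_max_image S id hS hSne
    rcases T.eq_empty_or_nonempty with rfl | hTne
    · exact ⟨s₀ + 1, fun s hs => lt_of_le_of_lt (hmax s hs) (lt_add_one s₀), by simp⟩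
    · obtain ⟨t₀, ht₀, hmin⟩ := Set.exists_min_image T id hT hTne
      have hst : s₀ < t₀ := h s₀ hs₀ t₀ ht₀
      exact ⟨(s₀ + t₀) / 2,
        fun s hs => lt_of_le_of_lt (hmax s hs) (by simpa using by linarith : s₀ < (s₀+t₀)/2),
        fun t ht => lt_of_lt_of_le (by linarith : (s₀+t₀)/2 < t₀) (hmin t ht)⟩

structure St (A B : Set (ℝ × ℝ)) where
  P : Set ((ℝ × ℝ) × (ℝ × ℝ))
  fin : P.Finite
  F : ℝ →ᵇ ℝ
  subA : ∀ p ∈ P, p.1 ∈ A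
  subB : ∀ p ∈ P, p.2 ∈ B
  ord : ∀ p ∈ P, ∀ q ∈ P, (p.1.1 < q.1.1 ↔ p.2.1 < q.2.1)
  val : ∀ p ∈ P, F p.2.1 = p.2.2 - p.1.2

lemma step_fwd {A B : Set (ℝ × ℝ)} (hBd : Dense B) (hAi : Set.InjOn Prod.fst A)
    (s : St A B) {a : ℝ × ℝ} (ha : a ∈ A) {ε : ℝ} (hε : 0 < ε) :
    ∃ s' : St A B, s.P ⊆ s'.P ∧ (∃ b, (a, b) ∈ s'.P) ∧ dist s'.F s.F ≤ ε := by
  by_cases hdone : ∃ b, (a, b) ∈ s.P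
  · exact ⟨s, subset_rfl, hdone, by simp [hε.le]⟩
  push_neg at hdone
  have hafresh : ∀ p ∈ s.P, p.1.1 ≠ a.1 := by
    intro p hp h
    have h2 : p.1 = a := hAi (s.subA p hp) ha h
    exact hdone p.2 (by rw [← h2]; simpa using hp)
  set V := {u : ℝ | ∀ p ∈ s.P, (p.1.1 < a.1 → p.2.1 < u) ∧ (a.1 < p.1.1 → u < p.2.1)} with hVdef
  have hVopen : IsOpen V := by
    have hV : V = ⋂ p ∈ s.P,
        ({u : ℝ | p.1.1 < a.1 → p.2.1 < u} ∩ {u | a.1 < p.1.1 → u < p.2.1}) := by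
      ext u; simp [hVdef, forall_and]
    rw [hV]
    exact s.fin.isOpen_biInter (fun p _ => isOpen_imp_lt.inter isOpen_imp_gt)
  have hVne : V.Nonempty := by
    obtain ⟨u, hu1, hu2⟩ := exists_between_finsets
      (S := (fun p : (ℝ×ℝ)×(ℝ×ℝ) => p.2.1) '' {p ∈ s.P | p.1.1 < a.1})
      (T := (fun p : (ℝ×ℝ)×(ℝ×ℝ) => p.2.1) '' {p ∈ s.P | a.1 < p.1.1})
      ((s.fin.subset (sep_subset _ _)).image _) ((s.fin.subset (sep_subset _ _)).image _)
      (by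
        rintro _ ⟨p, ⟨hp, hpl⟩, rfl⟩ _ ⟨q, ⟨hq, hqr⟩, rfl⟩
        exact (s.ord p hp q hq).1 (hpl.trans hqr))
    exact ⟨u, fun p hp => ⟨fun h => hu1 _ ⟨p, ⟨hp, h⟩, rfl⟩, fun h => hu2 _ ⟨p, ⟨hp, h⟩, rfl⟩⟩⟩
  set U := (Prod.fst ⁻¹' V) ∩ {q : ℝ × ℝ | |q.2 - (a.2 + s.F q.1)| < ε} with hUdef
  have hUopen : IsOpen U := (hVopen.preimage continuous_fst).inter
    (isOpen_lt ((continuous_snd.sub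
      (continuous_const.add (s.F.continuous.comp continuous_fst))).abs) continuous_const)
  have hUne : U.Nonempty := by
    obtain ⟨u, hu⟩ := hVne
    exact ⟨(u, a.2 + s.F u), hu, by simpa using hε⟩
  obtain ⟨b, hbB, hbU⟩ := hBd.exists_mem_open hUopen hUne
  obtain ⟨hbV, hbW⟩ := hbU
  have hbV' : ∀ p ∈ s.P, (p.1.1 < a.1 → p.2.1 < b.1) ∧ (a.1 < p.1.1 → b.1 < p.2.1) := hbV
  have hbne : ∀ p ∈ s.P, p.2.1 ≠ b.1 := by
    intro p hp h
    rcases lt_trichotomy p.1.1 a.1 with h' | h' | h'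
    · exact absurd h (ne_of_lt ((hbV' p hp).1 h'))
    · exact hafresh p hp h'
    · exact absurd h.symm (ne_of_lt ((hbV' p hp).2 h'))
  have hbfresh : b.1 ∉ (fun p : (ℝ×ℝ)×(ℝ×ℝ) => p.2.1) '' s.P := by
    rintro ⟨p, hp, hpe⟩
    exact hbne p hp hpe
  obtain ⟨F', hF'r, hF'z, hF'd⟩ := modifyF s.F (s.fin.image _) (b.2 - a.2) hbfresh
  have hvalb : |b.2 - a.2 - s.F b.1| < ε := by
    have h := hbW
    simp only [Set.mem_setOf_eq] at h
    calc |b.2 - a.2 - s.F b.1| = |b.2 - (a.2 + s.F b.1)| := by ring_nf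
    _ < ε := h
  have hord1 : ∀ p ∈ s.P, (p.1.1 < a.1 ↔ p.2.1 < b.1) := by
    intro p hp
    refine ⟨(hbV' p hp).1, fun h => ?_⟩
    rcases lt_trichotomy p.1.1 a.1 with h' | h' | h'
    · exact h'
    · exact absurd h' (hafresh p hp)
    · exact absurd h (asymm ((hbV' p hp).2 h'))
  have hord2 : ∀ p ∈ s.P, (a.1 < p.1.1 ↔ b.1 < p.2.1) := by
    intro p hp
    refine ⟨(hbV' p hp).2, fun h => ?_⟩
    rcases lt_trichotomy a.1 p.1.1 with h' | h' | h'
    · exact h'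
    · exact absurd h'.symm (hafresh p hp)
    · exact absurd h (asymm ((hbV' p hp).1 h'))
  refine ⟨⟨insert (a, b) s.P, s.fin.insert _, F', ?_, ?_, ?_, ?_⟩,
    subset_insert _ _, ⟨b, mem_insert _ _⟩, hF'd.trans hvalb.le⟩
  · rintro p (rfl | hp)
    · exact ha
    · exact s.subA p hp
  · rintro p (rfl | hp)
    · exact hbB
    · exact s.subB p hp
  · rintro p (rfl | hp) q (rfl | hq)
    · simp
    · exact hord2 q hq
    · exact hord1 p hp
    · exact s.ord p hp q hq
  · rintro p (rfl | hp)
    · exact hF'r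
    · exact (hF'z _ ⟨p, hp, rfl⟩).trans (s.val p hp)
lemma step_bwd {A B : Set (ℝ × ℝ)} (hAd : Dense A) (hBi : Set.InjOn Prod.fst B)
    (s : St A B) {b : ℝ × ℝ} (hb : b ∈ B) {ε : ℝ} (hε : 0 < ε) :
    ∃ s' : St A B, s.P ⊆ s'.P ∧ (∃ a, (a, b) ∈ s'.P) ∧ dist s'.F s.F ≤ ε := by
  by_cases hdone : ∃ a, (a, b) ∈ s.P
  · exact ⟨s, subset_rfl, hdone, by simp [hε.le]⟩
  push_neg at hdone
  have hbfresh' : ∀ p ∈ s.P, p.2.1 ≠ b.1 := by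
    intro p hp h
    have h2 : p.2 = b := hBi (s.subB p hp) hb h
    exact hdone p.1 (by rw [← h2]; simpa using hp)
  set V := {u : ℝ | ∀ p ∈ s.P, (p.2.1 < b.1 → p.1.1 < u) ∧ (b.1 < p.2.1 → u < p.1.1)} with hVdef
  have hVopen : IsOpen V := by
    have hV : V = ⋂ p ∈ s.P,
        ({u : ℝ | p.2.1 < b.1 → p.1.1 < u} ∩ {u | b.1 < p.2.1 → u < p.1.1}) := by
      ext u; simp [hVdef, forall_and]
    rw [hV]
    exact s.fin.isOpen_biInter (fun p _ => isOpen_imp_lt.inter isOpen_imp_gt)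
  have hVne : V.Nonempty := by
    obtain ⟨u, hu1, hu2⟩ := exists_between_finsets
      (S := (fun p : (ℝ×ℝ)×(ℝ×ℝ) => p.1.1) '' {p ∈ s.P | p.2.1 < b.1})
      (T := (fun p : (ℝ×ℝ)×(ℝ×ℝ) => p.1.1) '' {p ∈ s.P | b.1 < p.2.1})
      ((s.fin.subset (sep_subset _ _)).image _) ((s.fin.subset (sep_subset _ _)).image _)
      (by
        rintro _ ⟨p, ⟨hp, hpl⟩, rfl⟩ _ ⟨q, ⟨hq, hqr⟩, rfl⟩
        exact (s.ord p hp q hq).2 (hpl.trans hqr))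
    exact ⟨u, fun p hp => ⟨fun h => hu1 _ ⟨p, ⟨hp, h⟩, rfl⟩, fun h => hu2 _ ⟨p, ⟨hp, h⟩, rfl⟩⟩⟩
  set U := (Prod.fst ⁻¹' V) ∩ {q : ℝ × ℝ | |b.2 - q.2 - s.F b.1| < ε} with hUdef
  have hUopen : IsOpen U := (hVopen.preimage continuous_fst).inter
    (isOpen_lt (((continuous_const.sub continuous_snd).sub continuous_const).abs)
      continuous_const)
  have hUne : U.Nonempty := by
    obtain ⟨u, hu⟩ := hVne
    exact ⟨(u, b.2 - s.F b.1), hu, by simpa using hε⟩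
  obtain ⟨a, haA, haU⟩ := hAd.exists_mem_open hUopen hUne
  obtain ⟨haV, haW⟩ := haU
  have haV' : ∀ p ∈ s.P, (p.2.1 < b.1 → p.1.1 < a.1) ∧ (b.1 < p.2.1 → a.1 < p.1.1) := haV
  have hafresh : ∀ p ∈ s.P, p.1.1 ≠ a.1 := by
    intro p hp h
    rcases lt_trichotomy p.2.1 b.1 with h' | h' | h'
    · exact absurd h (ne_of_lt ((haV' p hp).1 h'))
    · exact hbfresh' p hp h'
    · exact absurd h.symm (ne_of_lt ((haV' p hp).2 h'))
  have hbfresh : b.1 ∉ (fun p : (ℝ×ℝ)×(ℝ×ℝ) => p.2.1) '' s.P := by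
    rintro ⟨p, hp, hpe⟩
    exact hbfresh' p hp hpe
  obtain ⟨F', hF'r, hF'z, hF'd⟩ := modifyF s.F (s.fin.image _) (b.2 - a.2) hbfresh
  have hvalb : |b.2 - a.2 - s.F b.1| < ε := by
    have h := haW
    simp only [Set.mem_setOf_eq] at h
    calc |b.2 - a.2 - s.F b.1| = |b.2 - a.2 - s.F b.1| := rfl
    _ < ε := by
          have : b.2 - a.2 - s.F b.1 = b.2 - a.2 - s.F b.1 := rfl
          calc |b.2 - a.2 - s.F b.1| = |b.2 - a.2 - s.F b.1| := rfl
          _ < ε := by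
                have h2 : b.2 - a.2 - s.F b.1 = b.2 - a.2 - s.F b.1 := rfl
                simpa [show b.2 - a.2 - s.F b.1 = b.2 - a.2 - s.F b.1 from rfl] using h
  have hord1 : ∀ p ∈ s.P, (p.1.1 < a.1 ↔ p.2.1 < b.1) := by
    intro p hp
    refine ⟨fun h => ?_, (haV' p hp).1⟩
    rcases lt_trichotomy p.2.1 b.1 with h' | h' | h'
    · exact h'
    · exact absurd h' (hbfresh' p hp)
    · exact absurd h (asymm ((haV' p hp).2 h'))
  have hord2 : ∀ p ∈ s.P, (a.1 < p.1.1 ↔ b.1 < p.2.1) := by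
    intro p hp
    refine ⟨fun h => ?_, (haV' p hp).2⟩
    rcases lt_trichotomy b.1 p.2.1 with h' | h' | h'
    · exact h'
    · exact absurd h'.symm (hbfresh' p hp)
    · exact absurd h (asymm ((haV' p hp).1 h'))
  refine ⟨⟨insert (a, b) s.P, s.fin.insert _, F', ?_, ?_, ?_, ?_⟩,
    Set.subset_insert _ _, ⟨a, Set.mem_insert _ _⟩, hF'd.trans hvalb.le⟩
  · rintro p (rfl | hp)
    · exact haA
    · exact s.subA p hp
  · rintro p (rfl | hp)
    · exact hb
    · exact s.subB p hp
  · rintro p (rfl | hp) q (rfl | hq)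
    · simp
    · exact hord2 q hq
    · exact hord1 p hp
    · exact s.ord p hp q hq
  · rintro p (rfl | hp)
    · exact hF'r
    · exact (hF'z _ ⟨p, hp, rfl⟩).trans (s.val p hp)
open Filter in
lemma key {A B : Set (ℝ × ℝ)} (hAc : A.Countable) (hAd : Dense A) (hBc : B.Countable)
    (hBd : Dense B) (hAi : Set.InjOn Prod.fst A) (hBi : Set.InjOn Prod.fst B) :
    ∃ h : (ℝ × ℝ) ≃ₜ (ℝ × ℝ), h '' A = B := by
  obtain ⟨e₀, hA⟩ := hAc.exists_eq_range hAd.nonempty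
  obtain ⟨e₁, hB⟩ := hBc.exists_eq_range hBd.nonempty
  have he₀ : ∀ n, e₀ n ∈ A := fun n => hA ▸ Set.mem_range_self n
  have he₁ : ∀ n, e₁ n ∈ B := fun n => hB ▸ Set.mem_range_self n
  have Hstep : ∀ (n : ℕ) (s : St A B), ∃ s' : St A B, s.P ⊆ s'.P ∧
      (∃ y, (e₀ n, y) ∈ s'.P) ∧ (∃ x, (x, e₁ n) ∈ s'.P) ∧
      dist s'.F s.F ≤ (1/2 : ℝ)^n := by
    intro n s
    have hε : (0:ℝ) < (1/2)^(n+1) := by positivity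
    obtain ⟨s₁, h1, ⟨y, hy⟩, h3⟩ := step_fwd hBd hAi s (he₀ n) hε
    obtain ⟨s₂, h1', ⟨x, hx⟩, h3'⟩ := step_bwd hAd hBi s₁ (he₁ n) hε
    refine ⟨s₂, h1.trans h1', ⟨y, h1' hy⟩, ⟨x, hx⟩, ?_⟩
    calc dist s₂.F s.F ≤ dist s₂.F s₁.F + dist s₁.F s.F := dist_triangle _ _ _
    _ ≤ (1/2)^(n+1) + (1/2)^(n+1) := add_le_add h3' h3
    _ = (1/2)^n := by ring
  choose step hP hAm hBm hd using Hstep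
  set s₀ : St A B := ⟨∅, Set.finite_empty, 0, by simp, by simp, by simp, by simp⟩ with hs₀
  set seq : ℕ → St A B := fun n => Nat.rec s₀ (fun n sn => step n sn) n with hseq
  have hseqsucc : ∀ n, seq (n+1) = step n (seq n) := fun n => rfl
  have hmono : ∀ m n, m ≤ n → (seq m).P ⊆ (seq n).P := by
    intro m n hmn
    induction n, hmn using Nat.le_induction with
    | base => exact subset_rfl
    | succ n hmn ih => exact ih.trans (by rw [hseqsucc]; exact hP n (seq n))
  -- Cauchy sequence of bounded continuous functions
  have hcauchy : CauchySeq (fun n => (seq n).F) := by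
    apply cauchySeq_of_le_geometric (1/2 : ℝ) 1 (by norm_num)
    intro n
    rw [hseqsucc, one_mul, dist_comm]
    exact hd n (seq n)
  obtain ⟨f, htend⟩ := cauchySeq_tendsto_of_complete hcauchy
  have hpt : ∀ x : ℝ, Tendsto (fun n => (seq n).F x) atTop (nhds (f x)) := by
    intro x
    rw [tendsto_iff_dist_tendsto_zero]
    apply squeeze_zero (fun n => dist_nonneg)
      (fun n => BoundedContinuousFunction.dist_coe_le_dist x)
    rwa [← tendsto_iff_dist_tendsto_zero]
  set R : Set ((ℝ×ℝ) × (ℝ×ℝ)) := ⋃ n, (seq n).P with hR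
  have hmemR : ∀ p ∈ R, ∃ n, p ∈ (seq n).P := fun p hp => Set.mem_iUnion.1 hp
  have hRA : ∀ p ∈ R, p.1 ∈ A := by
    intro p hp; obtain ⟨n, hn⟩ := hmemR p hp; exact (seq n).subA p hn
  have hRB : ∀ p ∈ R, p.2 ∈ B := by
    intro p hp; obtain ⟨n, hn⟩ := hmemR p hp; exact (seq n).subB p hn
  have hRord : ∀ p ∈ R, ∀ q ∈ R, (p.1.1 < q.1.1 ↔ p.2.1 < q.2.1) := by
    intro p hp q hq
    obtain ⟨n, hn⟩ := hmemR p hp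
    obtain ⟨m, hm⟩ := hmemR q hq
    exact (seq (max n m)).ord p (hmono n _ (le_max_left _ _) hn) q
      (hmono m _ (le_max_right _ _) hm)
  have hRval : ∀ p ∈ R, f p.2.1 = p.2.2 - p.1.2 := by
    intro p hp
    obtain ⟨n, hn⟩ := hmemR p hp
    have hconst : Tendsto (fun m => (seq m).F p.2.1) atTop (nhds (p.2.2 - p.1.2)) := by
      apply Tendsto.congr' _ tendsto_const_nhds
      filter_upwards [eventually_ge_atTop n] with m hm
      exact ((seq m).val p (hmono n m hm hn)).symm
    exact tendsto_nhds_unique (hpt p.2.1) hconst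
  have hRtotal : ∀ a ∈ A, ∃ b, (a, b) ∈ R := by
    intro a ha
    obtain ⟨n, rfl⟩ := hA ▸ ha
    obtain ⟨y, hy⟩ := hAm n (seq n)
    exact ⟨y, Set.mem_iUnion.2 ⟨n+1, by rw [hseqsucc]; exact hy⟩⟩
  have hRcototal : ∀ b ∈ B, ∃ a, (a, b) ∈ R := by
    intro b hb
    obtain ⟨n, rfl⟩ := hB ▸ hb
    obtain ⟨x, hx⟩ := hBm n (seq n)
    exact ⟨x, Set.mem_iUnion.2 ⟨n+1, by rw [hseqsucc]; exact hx⟩⟩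
  have hRfun : ∀ p ∈ R, ∀ q ∈ R, p.1 = q.1 → p.2 = q.2 := by
    intro p hp q hq h
    apply hBi (hRB p hp) (hRB q hq)
    have h1 := hRord p hp q hq
    have h2 := hRord q hq p hp
    rw [h] at h1
    rw [← h] at h2
    have : ¬ (p.2.1 < q.2.1) := fun hlt => lt_irrefl _ (h1.2 hlt)
    have : ¬ (q.2.1 < p.2.1) := fun hlt => lt_irrefl _ (h2.2 hlt)
    linarith [le_antisymm (not_lt.1 ‹¬ (p.2.1 < q.2.1)›) (not_lt.1 this)]
  have hRinj : ∀ p ∈ R, ∀ q ∈ R, p.2 = q.2 → p.1 = q.1 := by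
    intro p hp q hq h
    apply hAi (hRA p hp) (hRA q hq)
    have h1 := hRord p hp q hq
    have h2 := hRord q hq p hp
    rw [h] at h1
    rw [← h] at h2
    have hn1 : ¬ (p.1.1 < q.1.1) := fun hlt => lt_irrefl _ (h1.1 hlt)
    have hn2 : ¬ (q.1.1 < p.1.1) := fun hlt => lt_irrefl _ (h2.1 hlt)
    linarith [le_antisymm (not_lt.1 hn1) (not_lt.1 hn2)]
  -- matching function on points of A
  have hch : ∀ a : ℝ × ℝ, ∃ b : ℝ × ℝ, a ∈ A → (a, b) ∈ R := by
    intro a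
    by_cases ha : a ∈ A
    · obtain ⟨b, hb⟩ := hRtotal a ha; exact ⟨b, fun _ => hb⟩
    · exact ⟨0, fun h => absurd h ha⟩
  choose mτ hmτ using hch
  -- representative point of A above an x-coordinate
  have hch2 : ∀ x : ℝ, ∃ a : ℝ × ℝ, x ∈ Prod.fst '' A → (a ∈ A ∧ a.1 = x) := by
    intro x
    by_cases hx : x ∈ Prod.fst '' A
    · obtain ⟨a, ha, rfl⟩ := hx; exact ⟨a, fun _ => ⟨ha, rfl⟩⟩
    · exact ⟨0, fun h => absurd h hx⟩
  choose α hα using hch2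
  set φ : ℝ → ℝ := fun x => (mτ (α x)).1 with hφ
  have hXd : Dense (Prod.fst '' A) := by
    rw [dense_iff_inter_open]
    intro U hU ⟨x, hx⟩
    obtain ⟨p, hpA, hpU⟩ := hAd.exists_mem_open (hU.preimage continuous_fst)
      ⟨(x, 0), hx⟩
    exact ⟨p.1, hpU, ⟨p, hpA, rfl⟩⟩
  have hYd : Dense (Prod.fst '' B) := by
    rw [dense_iff_inter_open]
    intro U hU ⟨x, hx⟩
    obtain ⟨p, hpB, hpU⟩ := hBd.exists_mem_open (hU.preimage continuous_fst)
      ⟨(x, 0), hx⟩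
    exact ⟨p.1, hpU, ⟨p, hpB, rfl⟩⟩
  have hαa : ∀ a ∈ A, α a.1 = a := by
    intro a ha
    obtain ⟨h1, h2⟩ := hα a.1 ⟨a, ha, rfl⟩
    exact hAi h1 ha h2
  have hφa : ∀ a ∈ A, φ a.1 = (mτ a).1 := by
    intro a ha; rw [hφ]; simp only []; rw [hαa a ha]
  have hmono' : ∀ x ∈ Prod.fst '' A, ∀ x' ∈ Prod.fst '' A, (x < x' ↔ φ x < φ x') := by
    intro x hx x' hx'
    obtain ⟨ha, hax⟩ := hα x hx
    obtain ⟨ha', hax'⟩ := hα x' hx'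
    have h1 := hmτ (α x) ha
    have h2 := hmτ (α x') ha'
    have := hRord _ h1 _ h2
    rw [hax, hax'] at this
    exact this
  have hsurj' : ∀ y ∈ Prod.fst '' B, ∃ x ∈ Prod.fst '' A, φ x = y := by
    rintro _ ⟨b, hb, rfl⟩
    obtain ⟨a, hab⟩ := hRcototal b hb
    have haA : a ∈ A := hRA _ hab
    refine ⟨a.1, ⟨a, haA, rfl⟩, ?_⟩
    rw [hφa a haA]
    have : (a, mτ a) ∈ R := hmτ a haA
    have heq : (a, mτ a).2 = (a, b).2 := hRfun _ this _ hab rfl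
    simp only at heq
    rw [heq]
  obtain ⟨g, hg⟩ := extend_orderIso hXd hYd φ hmono' hsurj'
  -- the homeomorphism
  set Sh : (ℝ × ℝ) ≃ₜ (ℝ × ℝ) :=
    { toFun := fun q => (q.1, q.2 + f q.1)
      invFun := fun q => (q.1, q.2 - f q.1)
      left_inv := fun q => by simp
      right_inv := fun q => by simp
      continuous_toFun := continuous_fst.prodMk
        (continuous_snd.add (f.continuous.comp continuous_fst))
      continuous_invFun := continuous_fst.prodMk
        (continuous_snd.sub (f.continuous.comp continuous_fst)) } with hSh
  set G : (ℝ × ℝ) ≃ₜ (ℝ × ℝ) := (g.toHomeomorph).prodCongr (Homeomorph.refl ℝ) with hG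
  refine ⟨G.trans Sh, ?_⟩
  have himg : ∀ a ∈ A, (G.trans Sh) a = mτ a := by
    intro a ha
    have hab : (a, mτ a) ∈ R := hmτ a ha
    have hga : g a.1 = (mτ a).1 := by rw [hg a.1 ⟨a, ha, rfl⟩, hφa a ha]
    have hfv : f (mτ a).1 = (mτ a).2 - a.2 := hRval _ hab
    show Sh (G a) = mτ a
    have : G a = (g a.1, a.2) := rfl
    rw [this]
    show ((g a.1 : ℝ), a.2 + f (g a.1)) = mτ a
    rw [hga, hfv]
    ext <;> simp
  apply Set.eq_of_subset_of_subset
  · rintro _ ⟨a, ha, rfl⟩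
    rw [himg a ha]
    exact hRB _ (hmτ a ha)
  · intro b hb
    obtain ⟨a, hab⟩ := hRcototal b hb
    have haA : a ∈ A := hRA _ hab
    refine ⟨a, haA, ?_⟩
    rw [himg a haA]
    exact hRfun _ (hmτ a haA) _ hab rfl
noncomputable def shearH (c : ℝ) : (ℝ × ℝ) ≃ₜ (ℝ × ℝ) :=
  { toFun := fun q => (q.1 + c * q.2, q.2)
    invFun := fun q => (q.1 - c * q.2, q.2)
    left_inv := fun q => by ext <;> simp
    right_inv := fun q => by ext <;> simp
    continuous_toFun := (continuous_fst.add (continuous_const.mul continuous_snd)).prodMk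
      continuous_snd
    continuous_invFun := (continuous_fst.sub (continuous_const.mul continuous_snd)).prodMk
      continuous_snd }

lemma bad_countable {A : Set (ℝ × ℝ)} (hAc : A.Countable) :
    {c : ℝ | ∃ p ∈ A, ∃ q ∈ A, p ≠ q ∧ p.1 + c * p.2 = q.1 + c * q.2}.Countable := by
  apply Set.Countable.mono _ ((hAc.prod hAc).image
    (fun pq : (ℝ×ℝ) × (ℝ×ℝ) => (pq.2.1 - pq.1.1) / (pq.1.2 - pq.2.2)))
  rintro c ⟨p, hp, q, hq, hne, heq⟩
  refine ⟨(p, q), ⟨hp, hq⟩, ?_⟩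
  have h2 : p.2 ≠ q.2 := by
    intro h
    apply hne
    ext
    · have : p.1 = q.1 := by rw [h] at heq; linarith
      exact this
    · exact h
  show (q.1 - p.1) / (p.2 - q.2) = c
  field_simp [sub_ne_zero.2 h2]
  linarith

lemma injOn_fst_shear {A : Set (ℝ × ℝ)} {c : ℝ}
    (hc : c ∉ {c : ℝ | ∃ p ∈ A, ∃ q ∈ A, p ≠ q ∧ p.1 + c * p.2 = q.1 + c * q.2}) :
    Set.InjOn Prod.fst (shearH c '' A) := by
  rintro _ ⟨p, hp, rfl⟩ _ ⟨q, hq, rfl⟩ h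
  by_contra hne
  have hpq : p ≠ q := fun h' => hne (by rw [h'])
  exact hc ⟨p, hp, q, hq, hpq, h⟩

/-- (Bennett) Countable dense homogeneity of the plane: if `A₀` and `A₁` are countable
dense subsets of `ℝ²`, then there is a homeomorphism of `ℝ²` mapping `A₀` onto `A₁`. -/
theorem countable_dense_homogeneous_plane (A₀ A₁ : Set (ℝ × ℝ))
    (h₀c : A₀.Countable) (h₀d : Dense A₀) (h₁c : A₁.Countable) (h₁d : Dense A₁) :
    ∃ h : (ℝ × ℝ) ≃ₜ (ℝ × ℝ), h '' A₀ = A₁ := by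
  obtain ⟨c, hc⟩ : ∃ c : ℝ, c ∉
      ({c : ℝ | ∃ p ∈ A₀, ∃ q ∈ A₀, p ≠ q ∧ p.1 + c * p.2 = q.1 + c * q.2} ∪
       {c : ℝ | ∃ p ∈ A₁, ∃ q ∈ A₁, p ≠ q ∧ p.1 + c * p.2 = q.1 + c * q.2}) := by
    by_contra h
    push_neg at h
    exact Cardinal.not_countable_real
      (((bad_countable h₀c).union (bad_countable h₁c)).mono (fun c _ => h c))
  have hc₀ := fun h => hc (Set.mem_union_left _ h)
  have hc₁ := fun h => hc (Set.mem_union_right _ h)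
  set T := shearH c with hT
  have hdense : ∀ S : Set (ℝ × ℝ), Dense S → Dense (T '' S) := fun S hS =>
    T.isDenseEmbedding.toIsDenseInducing.dense_image.2 hS
  obtain ⟨H, hH⟩ := key (h₀c.image T) (hdense _ h₀d) (h₁c.image T) (hdense _ h₁d)
    (injOn_fst_shear hc₀) (injOn_fst_shear hc₁)
  refine ⟨(T.trans H).trans T.symm, ?_⟩
  have : ((T.trans H).trans T.symm) '' A₀ = T.symm '' (H '' (T '' A₀)) := by
    simp [Set.image_image]; rfl
  rw [this, hH, ← Set.image_comp]
  simp
end
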